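/- For a quasi-graded poset (P,ρ,ζ̄) with 0̂ and 1̂ and μ̄ = ζ̄^{-1}, the ab-index satisfies the dual recursion Ψ([x,z]) = −μ̄(x,z)·(a−b)^{ρ(x,z)−1} − ∑_{x<y<z} Ψ([x,y])·a·μ̄(y,z)·(a−b)^{ρ(y,z)−1}, for all x < z. -/

import Mathlib

open scoped Classical
open Finset

noncomputable section

/-- The free noncommutative algebra `ℚ⟨a,b⟩`. -/
abbrev QA : Type := FreeAlgebra ℚ Bool

/-- The variable `a`. -/
def av : QA := FreeAlgebra.ι ℚ true

/-- The variable `b`. -/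
def bv : QA := FreeAlgebra.ι ℚ false

/-- `c = a + b`. -/
def cvar : QA := av + bv

/-- `d = ab + ba`. -/
def dvar : QA := av * bv + bv * av

variable {α : Type*}

/-- The `ζ̄`-weight of a chain encoded as `f : Fin (k+1) → α`:
the product of the values of `ζ̄` on consecutive elements. -/
def chainZeta (ζ : α → α → ℚ) {k : ℕ} (f : Fin (k + 1) → α) : ℚ :=
  (List.ofFn (fun i : Fin k => ζ (f i.castSucc) (f i.succ))).prod

/-- The `ab`-weight of a chain: `(a-b)^{g₁-1} · b · (a-b)^{g₂-1} · b ⋯ b · (a-b)^{g_k-1}`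
where `gᵢ` are the successive rank gaps along the chain. -/
def chainWt (ρ : α → ℕ) {k : ℕ} (f : Fin (k + 1) → α) : QA :=
  (List.ofFn (fun i : Fin k =>
    (if (i : ℕ) = 0 then 1 else bv) *
      (av - bv) ^ (ρ (f i.succ) - ρ (f i.castSucc) - 1))).prod

/-- `f` encodes a (strict) chain from `x` to `z`. -/
def IsChainFrom [PartialOrder α] {k : ℕ} (f : Fin (k + 1) → α) (x z : α) : Prop :=
  StrictMono f ∧ f 0 = x ∧ f (Fin.last k) = z

/-- The ab-index `Ψ` of the interval `[x,z]` of a quasi-graded poset: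
the sum over all chains from `x` to `z` of `ζ̄(c) · wt(c)`. -/
def abIndex [PartialOrder α] [Fintype α] (ρ : α → ℕ) (ζ : α → α → ℚ) (x z : α) : QA :=
  ∑ k ∈ Finset.range (Fintype.card α), ∑ f : Fin (k + 1) → α,
    if IsChainFrom f x z then chainZeta ζ f • chainWt ρ f else 0

/-- `(P,ρ,ζ̄)` is a quasi-graded poset: `ρ` is strictly order-preserving and `ζ̄`
is an element of the incidence algebra with `ζ̄(x,x) = 1`. -/
def IsQuasiGraded [PartialOrder α] (ρ : α → ℕ) (ζ : α → α → ℚ) : Prop :=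
  StrictMono ρ ∧ (∀ x, ζ x x = 1) ∧ ∀ x y : α, ¬ x ≤ y → ζ x y = 0

/-- Convolution in the incidence algebra. -/
def iaMul [PartialOrder α] [Fintype α] (f g : α → α → ℚ) : α → α → ℚ :=
  fun x z => ∑ y ∈ Finset.univ.filter (fun y => x ≤ y ∧ y ≤ z), f x y * g y z

/-- The identity `δ` of the incidence algebra. -/
def iaDelta : α → α → ℚ := fun x z => if x = z then 1 else 0

/-- The Eulerian condition on the interval `[x,z]`:
`∑_{x ≤ y ≤ z} (-1)^{ρ(y)-ρ(x)} ζ̄(x,y) ζ̄(y,z) = δ_{x,z}`. -/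
def EulerianAt [PartialOrder α] [Fintype α] (ρ : α → ℕ) (ζ : α → α → ℚ) (x z : α) : Prop :=
  (∑ y ∈ Finset.univ.filter (fun y => x ≤ y ∧ y ≤ z),
    (-1 : ℚ) ^ (ρ y - ρ x) * ζ x y * ζ y z) = iaDelta x z

/-- `(P,ρ,ζ̄)` is Eulerian. -/
def IsEulerian [PartialOrder α] [Fintype α] (ρ : α → ℕ) (ζ : α → α → ℚ) : Prop :=
  ∀ x z : α, x ≤ z → EulerianAt ρ ζ x z

/-- The flag `f̄`-vector: `f̄_S = ∑_c ζ̄(c)` over chains from `x` to `z`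
whose interior elements have ranks exactly `S`. -/
def flagF [PartialOrder α] [Fintype α] (ρ : α → ℕ) (ζ : α → α → ℚ)
    (x z : α) (S : Finset ℕ) : ℚ :=
  ∑ k ∈ Finset.range (Fintype.card α), ∑ f : Fin (k + 1) → α,
    if IsChainFrom f x z ∧
        (Finset.univ.filter (fun i : Fin (k + 1) => i ≠ 0 ∧ i ≠ Fin.last k)).image
          (fun i => ρ (f i)) = S
      then chainZeta ζ f else 0

/-- The flag `h̄`-vector: `h̄_S = ∑_{T ⊆ S} (-1)^{|S-T|} f̄_T`. -/
def flagH [PartialOrder α] [Fintype α] (ρ : α → ℕ) (ζ : α → α → ℚ)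
    (x z : α) (S : Finset ℕ) : ℚ :=
  ∑ T ∈ S.powerset, (-1 : ℚ) ^ (S.card - T.card) * flagF ρ ζ x z T

/-- Chains with respect to an explicit strict relation `lt`. -/
def IsChainFromRel (lt : α → α → Prop) {k : ℕ} (f : Fin (k + 1) → α) (x z : α) : Prop :=
  (∀ i j : Fin (k + 1), i < j → lt (f i) (f j)) ∧ f 0 = x ∧ f (Fin.last k) = z

/-- The ab-index with respect to an explicit strict order relation `lt`. -/
def abIndexRel [Fintype α] (lt : α → α → Prop) (ρ : α → ℕ) (ζ : α → α → ℚ)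
    (x z : α) : QA :=
  ∑ k ∈ Finset.range (Fintype.card α), ∑ f : Fin (k + 1) → α,
    if IsChainFromRel lt f x z then chainZeta ζ f • chainWt ρ f else 0

/-- The Eulerian condition with respect to an explicit order relation `le`. -/
def IsEulerianRel [Fintype α] (le : α → α → Prop) (ρ : α → ℕ) (ζ : α → α → ℚ) : Prop :=
  ∀ x z : α, le x z →
    (∑ y ∈ Finset.univ.filter (fun y => le x y ∧ le y z),
      (-1 : ℚ) ^ (ρ y - ρ x) * ζ x y * ζ y z) = (if x = z then (1 : ℚ) else 0)

/-- Carrier of the zipped poset: remove `x` and `y`; the element `z` plays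
the role of the new element `w`. -/
abbrev ZipCarrier (α : Type*) (x y : α) : Type _ := {u : α // u ≠ x ∧ u ≠ y}

/-- The strict order of the zipped poset: `u <_Q w` iff `u < x` or `u < y`,
`w <_Q v` iff `x < v`, and otherwise the order is inherited from `P`. -/
def zipLt [PartialOrder α] (x y z : α) : ZipCarrier α x y → ZipCarrier α x y → Prop :=
  fun u v =>
    if u.1 = z then v.1 ≠ z ∧ x < v.1
    else if v.1 = z then u.1 < x ∨ u.1 < y
    else u.1 < v.1

/-- The (non-strict) order of the zipped poset. -/
def zipLe [PartialOrder α] (x y z : α) : ZipCarrier α x y → ZipCarrier α x y → Prop :=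
  fun u v => zipLt x y z u v ∨ u = v

/-- The rank function of the zipped poset: `ρ_Q(w) = ρ(x)`, otherwise inherited. -/
def zipRank [PartialOrder α] (ρ : α → ℕ) (x y z : α) : ZipCarrier α x y → ℕ :=
  fun u => if u.1 = z then ρ x else ρ u.1

/-- The weighted zeta function of the zipped poset:
`ζ̄_Q(w,v) = ζ̄(x,v)`, `ζ̄_Q(u,w) = ζ̄(u,x) + ζ̄(u,y) - ζ̄(u,z)`, otherwise inherited. -/
def zipZeta [PartialOrder α] (ζ : α → α → ℚ) (x y z : α) :
    ZipCarrier α x y → ZipCarrier α x y → ℚ :=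
  fun u v =>
    if v.1 = z then (if u.1 = z then 1 else ζ u.1 x + ζ u.1 y - ζ u.1 z)
    else if u.1 = z then ζ x v.1
    else ζ u.1 v.1

lemma snoc_strictMono_iff [PartialOrder α] {k : ℕ} {g : Fin (k + 1) → α} {w : α} :
    StrictMono (Fin.snoc g w : Fin (k + 2) → α) ↔ StrictMono g ∧ g (Fin.last k) < w := by
  rw [Fin.strictMono_iff_lt_succ, Fin.strictMono_iff_lt_succ]
  constructor
  · intro h
    refine ⟨fun i => ?_, ?_⟩
    · have := h i.castSucc
      simpa [Fin.succ_castSucc, -Fin.castSucc_succ] using this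
    · have := h (Fin.last k)
      simpa [Fin.succ_last] using this
  · rintro ⟨h1, h2⟩ i
    induction i using Fin.lastCases with
    | last => simpa [Fin.succ_last] using h2
    | cast j => simpa [Fin.succ_castSucc, -Fin.castSucc_succ] using h1 j

lemma chainZeta_snoc (ζ : α → α → ℚ) {k : ℕ} (g : Fin (k + 1) → α) (w : α) :
    chainZeta ζ (Fin.snoc g w : Fin (k + 2) → α) = chainZeta ζ g * ζ (g (Fin.last k)) w := by
  unfold chainZeta
  rw [List.ofFn_succ', List.concat_eq_append, List.prod_append, List.prod_cons, List.prod_nil,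
    mul_one]
  congr 1
  · exact congrArg List.prod (congrArg List.ofFn (funext fun i => by
      simp [Fin.succ_castSucc, -Fin.castSucc_succ]))
  · simp [Fin.succ_last]

lemma chainWt_snoc (ρ : α → ℕ) {k : ℕ} (g : Fin (k + 1) → α) (w : α) :
    chainWt ρ (Fin.snoc g w : Fin (k + 2) → α)
      = chainWt ρ g * ((if k = 0 then 1 else bv) * (av - bv) ^ (ρ w - ρ (g (Fin.last k)) - 1)) := by
  unfold chainWt
  rw [List.ofFn_succ', List.concat_eq_append, List.prod_append, List.prod_cons, List.prod_nil,
    mul_one]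
  congr 1
  · exact congrArg List.prod (congrArg List.ofFn (funext fun i => by
      simp [Fin.succ_castSucc, -Fin.castSucc_succ]))
  · simp [Fin.succ_last, Fin.val_last]

lemma isChainFrom_snoc_iff [PartialOrder α] {k : ℕ} {g : Fin (k + 1) → α} {w x z : α} :
    IsChainFrom (Fin.snoc g w : Fin (k + 2) → α) x z ↔
      w = z ∧ IsChainFrom g x (g (Fin.last k)) ∧ g (Fin.last k) < z := by
  unfold IsChainFrom
  rw [snoc_strictMono_iff]
  have h0' : (Fin.snoc g w : Fin (k + 2) → α) 0 = g 0 := by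
    have : (0 : Fin (k + 2)) = Fin.castSucc 0 := rfl
    rw [this, Fin.snoc_castSucc]
  constructor
  · rintro ⟨⟨hm, hlt⟩, h0, hl⟩
    rw [Fin.snoc_last] at hl
    subst hl
    rw [h0'] at h0
    exact ⟨rfl, ⟨hm, h0, rfl⟩, hlt⟩
  · rintro ⟨rfl, ⟨hm, h0, -⟩, hlt⟩
    exact ⟨⟨hm, hlt⟩, by rw [h0', h0], Fin.snoc_last _ _⟩

lemma IsChainFrom.le' [PartialOrder α] {k : ℕ} {f : Fin (k + 1) → α} {x z : α}
    (h : IsChainFrom f x z) : x ≤ z := by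
  rw [← h.2.1, ← h.2.2]
  exact h.1.monotone (Fin.zero_le _)

lemma IsChainFrom.eq_iff [PartialOrder α] {k : ℕ} {f : Fin (k + 1) → α} {x z : α}
    (h : IsChainFrom f x z) : k = 0 ↔ z = x := by
  constructor
  · rintro rfl
    rw [← h.2.1, ← h.2.2]; rfl
  · rintro rfl
    by_contra hk
    have hlast : (0 : Fin (k + 1)) < Fin.last k := by
      rw [Fin.lt_iff_val_lt_val]
      simpa using Nat.pos_of_ne_zero hk
    have := h.1 hlast
    rw [h.2.1, h.2.2] at this
    exact lt_irrefl _ this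

lemma IsChainFrom.card_lt [PartialOrder α] [Fintype α] {k : ℕ} {f : Fin (k + 1) → α} {x y : α}
    (h : IsChainFrom f x y) {z : α} (hyz : y < z) : k + 1 < Fintype.card α := by
  have hsm : StrictMono (Fin.snoc f z : Fin (k + 2) → α) :=
    snoc_strictMono_iff.mpr ⟨h.1, h.2.2 ▸ hyz⟩
  have := Fintype.card_le_of_injective _ hsm.injective
  simpa using this

lemma abIndex_eq_zero_of_not_le [PartialOrder α] [Fintype α] (ρ : α → ℕ) (ζ : α → α → ℚ)
    {x z : α} (h : ¬ x ≤ z) : abIndex ρ ζ x z = 0 := by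
  refine Finset.sum_eq_zero fun k _ => Finset.sum_eq_zero fun f _ => ?_
  rw [if_neg fun hc => h hc.le']

lemma abIndex_self [PartialOrder α] [Fintype α] (ρ : α → ℕ) (ζ : α → α → ℚ) (x : α) :
    abIndex ρ ζ x x = 1 := by
  obtain ⟨M, hM⟩ : ∃ M, Fintype.card α = M + 1 :=
    ⟨Fintype.card α - 1, by have := Fintype.card_pos_iff.mpr ⟨x⟩; omega⟩
  unfold abIndex
  rw [hM, Finset.sum_range_succ']
  have h0 : (∑ f : Fin 1 → α, if IsChainFrom f x x then chainZeta ζ f • chainWt ρ f else 0)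
      = 1 := by
    haveI : Subsingleton (Fin (0 + 1)) := Fin.subsingleton_one
    rw [Fintype.sum_eq_single (fun _ => x)]
    · rw [if_pos ⟨Subsingleton.strictMono _, rfl, rfl⟩]
      simp [chainZeta, chainWt]
    · intro f hf
      rw [if_neg]
      rintro ⟨-, h2, -⟩
      exact hf (funext fun i => by rw [Subsingleton.elim i 0]; exact h2)
  have hk : ∀ k ∈ Finset.range M, (∑ f : Fin (k + 1 + 1) → α,
      if IsChainFrom f x x then chainZeta ζ f • chainWt ρ f else 0) = 0 := by
    intro k _
    refine Finset.sum_eq_zero fun f _ => ?_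
    rw [if_neg]
    intro hc
    exact Nat.succ_ne_zero k (hc.eq_iff.mpr rfl)
  rw [Finset.sum_congr rfl hk, h0, Finset.sum_const_zero, zero_add]

lemma sum_snoc_step [PartialOrder α] [Fintype α] (ρ : α → ℕ) (ζ : α → α → ℚ)
    (x z : α) (k : ℕ) :
    (∑ f : Fin (k + 2) → α, if IsChainFrom f x z then chainZeta ζ f • chainWt ρ f else 0)
      = ∑ y ∈ Finset.univ.filter (fun y => y < z),
          (∑ g : Fin (k + 1) → α, if IsChainFrom g x y then chainZeta ζ g • chainWt ρ g else 0)
            * ((if y = x then 1 else bv) * (ζ y z • (av - bv) ^ (ρ z - ρ y - 1))) := by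
  have hbij : Function.Bijective
      (fun p : (Fin (k + 1) → α) × α => (Fin.snoc p.1 p.2 : Fin (k + 2) → α)) := by
    constructor
    · intro p q h
      have h1 : p.2 = q.2 := by
        have := congrArg (fun f => f (Fin.last (k + 1))) h
        simpa using this
      have h2 : p.1 = q.1 := funext fun i => by
        have := congrArg (fun f => f i.castSucc) h
        simpa using this
      exact Prod.ext h2 h1
    · intro f
      exact ⟨(Fin.init f, f (Fin.last (k + 1))), Fin.snoc_init_self f⟩
  rw [← Fintype.sum_bijective _ hbij
    (fun p : (Fin (k + 1) → α) × α =>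
      if IsChainFrom (Fin.snoc p.1 p.2 : Fin (k + 2) → α) x z
        then chainZeta ζ (Fin.snoc p.1 p.2 : Fin (k + 2) → α)
          • chainWt ρ (Fin.snoc p.1 p.2 : Fin (k + 2) → α) else 0)
    (fun f => if IsChainFrom f x z then chainZeta ζ f • chainWt ρ f else 0)
    (fun p => rfl), Fintype.sum_prod_type]
  have collapse : ∀ g : Fin (k + 1) → α,
      (∑ w : α, if IsChainFrom (Fin.snoc g w : Fin (k + 2) → α) x z
          then chainZeta ζ (Fin.snoc g w : Fin (k + 2) → α)
            • chainWt ρ (Fin.snoc g w : Fin (k + 2) → α) else 0)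
        = (if IsChainFrom g x (g (Fin.last k)) then if g (Fin.last k) < z
            then chainZeta ζ (Fin.snoc g z : Fin (k + 2) → α)
              • chainWt ρ (Fin.snoc g z : Fin (k + 2) → α) else 0 else 0) := by
    intro g
    have hw : ∀ w : α, (if IsChainFrom (Fin.snoc g w : Fin (k + 2) → α) x z
        then chainZeta ζ (Fin.snoc g w : Fin (k + 2) → α)
          • chainWt ρ (Fin.snoc g w : Fin (k + 2) → α) else 0)
        = (if w = z then (if IsChainFrom g x (g (Fin.last k)) then if g (Fin.last k) < z
            then chainZeta ζ (Fin.snoc g w : Fin (k + 2) → α)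
              • chainWt ρ (Fin.snoc g w : Fin (k + 2) → α) else 0 else 0) else 0) := by
      intro w
      simp only [isChainFrom_snoc_iff, ite_and]
    rw [Finset.sum_congr rfl (fun w _ => hw w), Finset.sum_ite_eq' Finset.univ z,
      if_pos (Finset.mem_univ z)]
  rw [Finset.sum_congr rfl (fun g _ => collapse g),
    ← Finset.sum_fiberwise Finset.univ (fun g : Fin (k + 1) → α => g (Fin.last k))]
  rw [show (∑ y ∈ Finset.univ.filter (fun y => y < z),
      (∑ g : Fin (k + 1) → α, if IsChainFrom g x y then chainZeta ζ g • chainWt ρ g else 0)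
        * ((if y = x then 1 else bv) * (ζ y z • (av - bv) ^ (ρ z - ρ y - 1))))
    = ∑ y : α, if y < z then
        (∑ g : Fin (k + 1) → α, if IsChainFrom g x y then chainZeta ζ g • chainWt ρ g else 0)
          * ((if y = x then 1 else bv) * (ζ y z • (av - bv) ^ (ρ z - ρ y - 1))) else 0
    from Finset.sum_filter _ _]
  refine Finset.sum_congr rfl fun y _ => ?_
  by_cases hyz : y < z
  · rw [if_pos hyz, Finset.sum_mul,
      show (∑ g ∈ Finset.univ.filter (fun g : Fin (k + 1) → α => g (Fin.last k) = y),
        (if IsChainFrom g x (g (Fin.last k)) then if g (Fin.last k) < z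
            then chainZeta ζ (Fin.snoc g z : Fin (k + 2) → α)
              • chainWt ρ (Fin.snoc g z : Fin (k + 2) → α) else 0 else 0))
      = ∑ g : Fin (k + 1) → α, if g (Fin.last k) = y then
          (if IsChainFrom g x (g (Fin.last k)) then if g (Fin.last k) < z
            then chainZeta ζ (Fin.snoc g z : Fin (k + 2) → α)
              • chainWt ρ (Fin.snoc g z : Fin (k + 2) → α) else 0 else 0) else 0
      from Finset.sum_filter _ _]
    refine Finset.sum_congr rfl fun g _ => ?_
    by_cases h1 : g (Fin.last k) = y
    · rw [if_pos h1]
      by_cases h2 : IsChainFrom g x (g (Fin.last k))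
      · have h2' : IsChainFrom g x y := h1 ▸ h2
        rw [if_pos h2, if_pos (h1 ▸ hyz : g (Fin.last k) < z), if_pos h2',
          chainZeta_snoc, chainWt_snoc, h1]
        have hbk : (if k = 0 then (1 : QA) else bv) = (if y = x then 1 else bv) := by
          by_cases hk : k = 0
          · rw [if_pos hk, if_pos (h2'.eq_iff.mp hk)]
          · rw [if_neg hk, if_neg fun hyx => hk (h2'.eq_iff.mpr hyx)]
        rw [hbk, mul_smul, smul_mul_assoc]
        congr 1
        rw [mul_smul_comm, mul_smul_comm]
      · rw [if_neg h2, if_neg fun hc => h2 (by rw [h1]; exact hc), zero_mul]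
    · rw [if_neg h1, if_neg fun hc => h1 hc.2.2, zero_mul]
  · rw [if_neg hyz]
    refine Finset.sum_eq_zero fun g hg => ?_
    have h1 : g (Fin.last k) = y := (Finset.mem_filter.mp hg).2
    simp [h1, hyz]

lemma abIndex_primal [PartialOrder α] [Fintype α] (ρ : α → ℕ) (ζ : α → α → ℚ)
    {x z : α} (hxz : x < z) :
    abIndex ρ ζ x z = ζ x z • (av - bv) ^ (ρ z - ρ x - 1)
      + ∑ y ∈ Finset.univ.filter (fun y => x < y ∧ y < z),
          abIndex ρ ζ x y * (bv * (ζ y z • (av - bv) ^ (ρ z - ρ y - 1))) := by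
  obtain ⟨M, hM⟩ : ∃ M, Fintype.card α = M + 1 :=
    ⟨Fintype.card α - 1, by have := Fintype.card_pos_iff.mpr ⟨x⟩; omega⟩
  have htop : ∀ y : α, y < z → (∑ f : Fin (M + 1) → α,
      if IsChainFrom f x y then chainZeta ζ f • chainWt ρ f else 0) = 0 := by
    intro y hy
    refine Finset.sum_eq_zero fun f _ => ?_
    rw [if_neg fun hc => by have := hc.card_lt hy; omega]
  have h0 : (∑ f : Fin 1 → α, if IsChainFrom f x z then chainZeta ζ f • chainWt ρ f else 0)
      = 0 := by
    refine Finset.sum_eq_zero fun f _ => ?_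
    rw [if_neg fun hc => hxz.ne (hc.eq_iff.mp rfl).symm]
  have expand : abIndex ρ ζ x z
      = ∑ y ∈ Finset.univ.filter (fun y => y < z),
          abIndex ρ ζ x y
            * ((if y = x then 1 else bv) * (ζ y z • (av - bv) ^ (ρ z - ρ y - 1))) := by
    unfold abIndex
    rw [hM, Finset.sum_range_succ', h0, add_zero,
      Finset.sum_congr rfl (fun k _ => sum_snoc_step ρ ζ x z k), Finset.sum_comm]
    refine Finset.sum_congr rfl fun y hy => ?_
    rw [← Finset.sum_mul]
    congr 1
    rw [Finset.sum_range_succ, htop y (Finset.mem_filter.mp hy).2, add_zero]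
  rw [expand]
  rw [← Finset.sum_filter_of_ne (s := Finset.univ.filter (fun y => y < z))
    (p := fun y => x ≤ y) (fun y _ hne => by
      by_contra hxy
      exact hne (by rw [abIndex_eq_zero_of_not_le ρ ζ hxy, zero_mul]))]
  have hset : (Finset.univ.filter (fun y => y < z)).filter (fun y => x ≤ y)
      = insert x (Finset.univ.filter (fun y => x < y ∧ y < z)) := by
    ext v
    simp only [Finset.mem_filter, Finset.mem_univ, Finset.mem_insert, true_and]
    constructor
    · rintro ⟨h1, h2⟩
      rcases eq_or_lt_of_le h2 with h3 | h3
      · exact Or.inl h3.symm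
      · exact Or.inr ⟨h3, h1⟩
    · rintro (rfl | ⟨h1, h2⟩)
      · exact ⟨hxz, le_refl _⟩
      · exact ⟨h2, h1.le⟩
  rw [hset, Finset.sum_insert (by simp)]
  rw [abIndex_self, if_pos rfl, one_mul, one_mul]
  congr 1
  refine Finset.sum_congr rfl fun y hy => ?_
  rw [if_neg ((Finset.mem_filter.mp hy).2.1.ne')]

lemma Icc_split [PartialOrder α] [Fintype α] {u z : α} (h : u < z) :
    Finset.univ.filter (fun w => u ≤ w ∧ w ≤ z)
      = insert z (Finset.univ.filter (fun w => u ≤ w ∧ w < z)) := by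
  ext v
  simp only [Finset.mem_filter, Finset.mem_univ, Finset.mem_insert, true_and]
  constructor
  · rintro ⟨h1, h2⟩
    rcases eq_or_lt_of_le h2 with h3 | h3
    · exact Or.inl h3
    · exact Or.inr ⟨h1, h3⟩
  · rintro (rfl | ⟨h1, h2⟩)
    · exact ⟨h.le, le_refl _⟩
    · exact ⟨h1, h2.le⟩

lemma Ico_split [PartialOrder α] [Fintype α] {u z : α} (h : u < z) :
    Finset.univ.filter (fun w => u ≤ w ∧ w < z)
      = insert u (Finset.univ.filter (fun w => u < w ∧ w < z)) := by
  ext v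
  simp only [Finset.mem_filter, Finset.mem_univ, Finset.mem_insert, true_and]
  constructor
  · rintro ⟨h1, h2⟩
    rcases eq_or_lt_of_le h1 with h3 | h3
    · exact Or.inl h3.symm
    · exact Or.inr ⟨h3, h2⟩
  · rintro (rfl | ⟨h1, h2⟩)
    · exact ⟨le_refl _, h⟩
    · exact ⟨h1.le, h2⟩

lemma m_self [PartialOrder α] [Fintype α] {ζ m : α → α → ℚ} (hζ : ∀ u, ζ u u = 1)
    (hm₁ : iaMul ζ m = iaDelta) (u : α) : m u u = 1 := by
  have h := congrFun (congrFun hm₁ u) u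
  rw [iaMul, iaDelta, if_pos rfl] at h
  have hset : Finset.univ.filter (fun y => u ≤ y ∧ y ≤ u) = {u} := by
    ext v
    simp only [Finset.mem_filter, Finset.mem_univ, Finset.mem_singleton, true_and]
    constructor
    · rintro ⟨h1, h2⟩; exact le_antisymm h2 h1
    · rintro rfl; exact ⟨le_refl _, le_refl _⟩
  rw [hset, Finset.sum_singleton, hζ, one_mul] at h
  exact h

lemma m_rec [PartialOrder α] [Fintype α] {ζ m : α → α → ℚ} (hζ : ∀ u, ζ u u = 1)
    (hm₂ : iaMul m ζ = iaDelta) {u z : α} (h : u < z) :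
    m u z = -∑ w ∈ Finset.univ.filter (fun w => u ≤ w ∧ w < z), m u w * ζ w z := by
  have hh := congrFun (congrFun hm₂ u) z
  rw [iaMul, iaDelta, if_neg h.ne, Icc_split h, Finset.sum_insert (by simp), hζ, mul_one] at hh
  linarith [hh]

lemma dual_aux [Fintype α] [PartialOrder α] (ρ : α → ℕ) (ζ : α → α → ℚ)
    (hq : IsQuasiGraded ρ ζ) (m : α → α → ℚ)
    (hm₁ : iaMul ζ m = iaDelta) (hm₂ : iaMul m ζ = iaDelta) (x : α) :
    ∀ n (z : α), ρ z ≤ n → x < z →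
    abIndex ρ ζ x z =
      -(m x z • (av - bv) ^ (ρ z - ρ x - 1))
        - ∑ y ∈ Finset.univ.filter (fun y => x < y ∧ y < z),
            abIndex ρ ζ x y * av * (m y z • (av - bv) ^ (ρ z - ρ y - 1)) := by
  have hρ := hq.1
  have hζ := hq.2.1
  have hterm : ∀ (c d : ℚ) (u w v : α), u < w → w < v →
      (c * d) • (av - bv) ^ (ρ v - ρ u - 1)
        = (c • (av - bv) ^ (ρ w - ρ u - 1))
            * ((av - bv) * (d • (av - bv) ^ (ρ v - ρ w - 1))) := by
    intro c d u w v h1 h2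
    have e1 := hρ h1
    have e2 := hρ h2
    have hexp : ρ v - ρ u - 1 = (ρ w - ρ u - 1) + 1 + (ρ v - ρ w - 1) := by omega
    rw [hexp, pow_add, pow_add, pow_one, mul_smul, smul_mul_assoc]
    congr 1
    rw [mul_smul_comm, mul_smul_comm, mul_assoc]
  intro n
  induction n with
  | zero => intro z hz hxz; exact absurd (hρ hxz) (by omega)
  | succ n ih =>
    intro z hz hxz
    have hA : -(m x z • (av - bv) ^ (ρ z - ρ x - 1))
        = ζ x z • (av - bv) ^ (ρ z - ρ x - 1)
          + ∑ w ∈ Finset.univ.filter (fun w => x < w ∧ w < z),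
              (m x w • (av - bv) ^ (ρ w - ρ x - 1))
                * ((av - bv) * (ζ w z • (av - bv) ^ (ρ z - ρ w - 1))) := by
      rw [m_rec hζ hm₂ hxz, neg_smul, neg_neg, Finset.sum_smul, Ico_split hxz,
        Finset.sum_insert (by simp), m_self hζ hm₁, one_mul]
      congr 1
      refine Finset.sum_congr rfl fun w hw => ?_
      obtain ⟨hw1, hw2⟩ := (Finset.mem_filter.mp hw).2
      exact hterm _ _ _ _ _ hw1 hw2
    have hB : ∀ y ∈ Finset.univ.filter (fun y => x < y ∧ y < z),
        abIndex ρ ζ x y * av * (m y z • (av - bv) ^ (ρ z - ρ y - 1))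
          = -(abIndex ρ ζ x y * av * (ζ y z • (av - bv) ^ (ρ z - ρ y - 1))
              + ∑ w ∈ Finset.univ.filter (fun w => y < w ∧ w < z),
                  (abIndex ρ ζ x y * av * (m y w • (av - bv) ^ (ρ w - ρ y - 1)))
                    * ((av - bv) * (ζ w z • (av - bv) ^ (ρ z - ρ w - 1)))) := by
      intro y hy
      obtain ⟨hxy, hyz⟩ := (Finset.mem_filter.mp hy).2
      rw [m_rec hζ hm₂ hyz, neg_smul, mul_neg, Finset.sum_smul, Ico_split hyz,
        Finset.sum_insert (by simp), m_self hζ hm₁, one_mul, mul_add, Finset.mul_sum]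
      congr 2
      refine Finset.sum_congr rfl fun w hw => ?_
      obtain ⟨hw1, hw2⟩ := (Finset.mem_filter.mp hw).2
      rw [hterm _ _ _ _ _ hw1 hw2, ← mul_assoc]
    rw [hA, Finset.sum_congr rfl hB]
    rw [show (∑ y ∈ Finset.univ.filter (fun y => x < y ∧ y < z),
        -(abIndex ρ ζ x y * av * (ζ y z • (av - bv) ^ (ρ z - ρ y - 1))
          + ∑ w ∈ Finset.univ.filter (fun w => y < w ∧ w < z),
              (abIndex ρ ζ x y * av * (m y w • (av - bv) ^ (ρ w - ρ y - 1)))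
                * ((av - bv) * (ζ w z • (av - bv) ^ (ρ z - ρ w - 1)))))
      = -((∑ y ∈ Finset.univ.filter (fun y => x < y ∧ y < z),
            abIndex ρ ζ x y * av * (ζ y z • (av - bv) ^ (ρ z - ρ y - 1)))
          + ∑ y ∈ Finset.univ.filter (fun y => x < y ∧ y < z),
              ∑ w ∈ Finset.univ.filter (fun w => y < w ∧ w < z),
                (abIndex ρ ζ x y * av * (m y w • (av - bv) ^ (ρ w - ρ y - 1)))
                  * ((av - bv) * (ζ w z • (av - bv) ^ (ρ z - ρ w - 1)))) from by
        rw [← Finset.sum_add_distrib]; exact Finset.sum_neg_distrib _ ]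
    have hswap : (∑ y ∈ Finset.univ.filter (fun y => x < y ∧ y < z),
        ∑ w ∈ Finset.univ.filter (fun w => y < w ∧ w < z),
          (abIndex ρ ζ x y * av * (m y w • (av - bv) ^ (ρ w - ρ y - 1)))
            * ((av - bv) * (ζ w z • (av - bv) ^ (ρ z - ρ w - 1))))
        = ∑ w ∈ Finset.univ.filter (fun w => x < w ∧ w < z),
            ∑ y ∈ Finset.univ.filter (fun y => x < y ∧ y < w),
              (abIndex ρ ζ x y * av * (m y w • (av - bv) ^ (ρ w - ρ y - 1)))
                * ((av - bv) * (ζ w z • (av - bv) ^ (ρ z - ρ w - 1))) := by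
      refine Finset.sum_comm' fun y w => ?_
      simp only [Finset.mem_filter, Finset.mem_univ, true_and]
      constructor
      · rintro ⟨⟨h1, h2⟩, h3, h4⟩
        exact ⟨⟨h1, h3⟩, h1.trans h3, h4⟩
      · rintro ⟨⟨h1, h2⟩, h3, h4⟩
        exact ⟨⟨h1, h2.trans h4⟩, h2, h4⟩
    rw [hswap]
    have hD : ∀ w ∈ Finset.univ.filter (fun w => x < w ∧ w < z),
        (m x w • (av - bv) ^ (ρ w - ρ x - 1))
            * ((av - bv) * (ζ w z • (av - bv) ^ (ρ z - ρ w - 1)))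
          + ∑ y ∈ Finset.univ.filter (fun y => x < y ∧ y < w),
              (abIndex ρ ζ x y * av * (m y w • (av - bv) ^ (ρ w - ρ y - 1)))
                * ((av - bv) * (ζ w z • (av - bv) ^ (ρ z - ρ w - 1)))
          = -(abIndex ρ ζ x w) * ((av - bv) * (ζ w z • (av - bv) ^ (ρ z - ρ w - 1))) := by
      intro w hw
      obtain ⟨hw1, hw2⟩ := (Finset.mem_filter.mp hw).2
      have hρw : ρ w ≤ n := by have := hρ hw2; omega
      rw [← Finset.sum_mul, ← add_mul, ih w hρw hw1]
      congr 1
      abel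
    -- now assemble
    have habel : ∀ (c p a d : QA), c + p - -(a + d) = c + (a + (p + d)) := fun c p a d => by
      abel
    rw [habel, ← Finset.sum_add_distrib, Finset.sum_congr rfl hD, abIndex_primal ρ ζ hxz]
    congr 1
    rw [← Finset.sum_add_distrib]
    have hsplit : ∀ (P X : QA), P * av * X + -P * ((av - bv) * X) = P * (bv * X) := by
      intro P X
      noncomm_ring
    exact Finset.sum_congr rfl fun y _ => (hsplit _ _).symm

/-- the dual recursion for the ab-index via `μ̄ = ζ̄⁻¹`:
`Ψ([x,z]) = -μ̄(x,z)(a-b)^{ρ(x,z)-1} - ∑_{x<y<z} Ψ([x,y])·a·μ̄(y,z)(a-b)^{ρ(y,z)-1}`. -/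
theorem abIndex_dual_recursion {α : Type*} [Fintype α] [PartialOrder α] [BoundedOrder α]
    (ρ : α → ℕ) (ζ : α → α → ℚ) (hq : IsQuasiGraded ρ ζ)
    (m : α → α → ℚ) (hm₁ : iaMul ζ m = iaDelta) (hm₂ : iaMul m ζ = iaDelta)
    (x z : α) (hxz : x < z) :
    abIndex ρ ζ x z =
      -(m x z • (av - bv) ^ (ρ z - ρ x - 1))
        - ∑ y ∈ Finset.univ.filter (fun y => x < y ∧ y < z),
            abIndex ρ ζ x y * av * (m y z • (av - bv) ^ (ρ z - ρ y - 1)) := by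
  exact dual_aux ρ ζ hq m hm₁ hm₂ x (ρ z) z le_rfl hxz
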